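/- For the single-cell subproblem with value τ_ℓ(f) (minimize ∫_{C_ℓ} (D − x(ξ))/S_ℓ(ξ) λ(dξ) subject to 0 ≤ x ≤ D and ∫_{C_ℓ} x(ξ)/R_ℓ(ξ) λ(dξ) ≤ f), the left derivative of τ_ℓ at f satisfies (τ_ℓ)'_−(f) ≤ −ρ_ℓ(f) and the right derivative satisfies (τ_ℓ)'_+(f) ≥ −ρ_ℓ(f), where ρ_ℓ(f) = sup{x : ∫_{{ρ_ℓ > x}} (D/R_ℓ) dλ > f}. -/

import Mathlib

open MeasureTheory Set

private lemma integrableOn_of_bound {E : Type*} [MeasurableSpace E] (μ : Measure E)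
    [IsFiniteMeasure μ] {A : Set E} (hA : MeasurableSet A) {g : E → ℝ}
    (hg : AEMeasurable g (μ.restrict A)) (M : ℝ) (hb : ∀ ξ ∈ A, |g ξ| ≤ M) :
    IntegrableOn g A μ := by
  refine Integrable.mono' (integrable_const M) hg.aestronglyMeasurable ?_
  filter_upwards [ae_restrict_mem hA] with ξ hξ using hb ξ hξ

private lemma setIntegral_le_bound {E : Type*} [MeasurableSpace E] (μ : Measure E)
    [IsFiniteMeasure μ] {A : Set E} (hA : MeasurableSet A) {g : E → ℝ}
    (hint : IntegrableOn g A μ) (M : ℝ)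
    (hb : ∀ ξ ∈ A, g ξ ≤ M) : ∫ ξ in A, g ξ ∂μ ≤ M * (μ A).toReal := by
  calc ∫ ξ in A, g ξ ∂μ ≤ ∫ _ in A, M ∂μ :=
        setIntegral_mono_on hint (integrableOn_const (measure_lt_top μ A).ne) hA hb
    _ = M * (μ A).toReal := by rw [setIntegral_const, smul_eq_mul, mul_comm, measureReal_def]

set_option maxHeartbeats 1000000 in
theorem tau_one_sided_derivatives
    (C : Set (EuclideanSpace ℝ (Fin 2))) (hC : IsCompact C)
    (μ : Measure (EuclideanSpace ℝ (Fin 2))) [IsFiniteMeasure μ]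
    (D : ℝ) (hD : 0 < D)
    (R S : EuclideanSpace ℝ (Fin 2) → ℝ)
    (hRcont : ContinuousOn R C) (hScont : ContinuousOn S C)
    (Rmin Rmax Smin Smax : ℝ) (hRmin : 0 < Rmin) (hSmin : 0 < Smin)
    (hR : ∀ ξ ∈ C, Rmin ≤ R ξ ∧ R ξ ≤ Rmax)
    (hS : ∀ ξ ∈ C, Smin ≤ S ξ ∧ S ξ ≤ Smax)
    (ρmin ρmax : ℝ) (hρmin : 0 < ρmin)
    (hρrange : ∀ ξ ∈ C, R ξ / S ξ ∈ Icc ρmin ρmax)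
    -- the induced rate-ratio distribution has a continuous density,
    -- positive at the endpoints of its support
    (h : ℝ → ℝ) (hcont : Continuous h)
    (hdens : ∀ x y : ℝ, ρmin ≤ x → x ≤ y → y ≤ ρmax →
      (((μ.restrict C).map (fun ξ => R ξ / S ξ)) (Ioc x y)).toReal
        = (μ C).toReal * ∫ t in x..y, h t)
    (hposlo : 0 < h ρmin) (hposhi : 0 < h ρmax)
    (fbar : ℝ) (hfbar : fbar = ∫ ξ in C, D / R ξ ∂μ)
    (τ : ℝ → ℝ)
    (hτ : ∀ f : ℝ, τ f = sInf {v : ℝ | ∃ x : EuclideanSpace ℝ (Fin 2) → ℝ,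
        Measurable x ∧ (∀ ξ, 0 ≤ x ξ ∧ x ξ ≤ D) ∧
        (∫ ξ in C, x ξ / R ξ ∂μ) ≤ f ∧
        v = ∫ ξ in C, (D - x ξ) / S ξ ∂μ})
    (ρf : ℝ → ℝ)
    (hρf : ∀ f : ℝ, ρf f =
      sSup {x : ℝ | f < ∫ ξ in {ξ ∈ C | x < R ξ / S ξ}, D / R ξ ∂μ}) :
    ∀ f ∈ Icc (0:ℝ) fbar,
      (∀ g, 0 ≤ g → g < f → (τ f - τ g) / (f - g) ≤ - ρf f) ∧
      (∀ g, f < g → g ≤ fbar → - ρf f ≤ (τ g - τ f) / (g - f)) := by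
  intro f hf
  -- ## Basic facts
  have hCm : MeasurableSet C := hC.isClosed.measurableSet
  have hRpos : ∀ ξ ∈ C, 0 < R ξ := fun ξ hξ => lt_of_lt_of_le hRmin (hR ξ hξ).1
  have hSpos : ∀ ξ ∈ C, 0 < S ξ := fun ξ hξ => lt_of_lt_of_le hSmin (hS ξ hξ).1
  have hρcont : ContinuousOn (fun ξ => R ξ / S ξ) C :=
    hRcont.div hScont fun ξ hξ => (hSpos ξ hξ).ne'
  have hρae : AEMeasurable (fun ξ => R ξ / S ξ) (μ.restrict C) := hρcont.aemeasurable hCm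
  have hRae : AEMeasurable R (μ.restrict C) := hRcont.aemeasurable hCm
  -- measurability of level sets
  have hLe : ∀ a : ℝ, MeasurableSet {ξ | ξ ∈ C ∧ R ξ / S ξ ≤ a} := by
    intro a
    have he : {ξ | ξ ∈ C ∧ R ξ / S ξ ≤ a} = C ∩ (fun ξ => R ξ / S ξ) ⁻¹' (Iic a) := rfl
    rw [he]
    exact (hρcont.preimage_isClosed_of_isClosed hC.isClosed isClosed_Iic).measurableSet
  have hGe : ∀ a : ℝ, MeasurableSet {ξ | ξ ∈ C ∧ a ≤ R ξ / S ξ} := by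
    intro a
    have he : {ξ | ξ ∈ C ∧ a ≤ R ξ / S ξ} = C ∩ (fun ξ => R ξ / S ξ) ⁻¹' (Ici a) := rfl
    rw [he]
    exact (hρcont.preimage_isClosed_of_isClosed hC.isClosed isClosed_Ici).measurableSet
  have hGt : ∀ a : ℝ, MeasurableSet {ξ | ξ ∈ C ∧ a < R ξ / S ξ} := by
    intro a
    have he : {ξ | ξ ∈ C ∧ a < R ξ / S ξ} = C \ {ξ | ξ ∈ C ∧ R ξ / S ξ ≤ a} := by
      ext ξ; simp only [mem_setOf_eq, mem_diff, not_and, not_le]; tauto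
    rw [he]; exact hCm.diff (hLe a)
  have hEqm : ∀ a : ℝ, MeasurableSet {ξ | ξ ∈ C ∧ R ξ / S ξ = a} := by
    intro a
    have he : {ξ | ξ ∈ C ∧ R ξ / S ξ = a}
        = {ξ | ξ ∈ C ∧ R ξ / S ξ ≤ a} ∩ {ξ | ξ ∈ C ∧ a ≤ R ξ / S ξ} := by
      ext ξ
      simp only [mem_setOf_eq, mem_inter_iff]
      constructor
      · rintro ⟨h1, h2⟩; exact ⟨⟨h1, h2.le⟩, h1, h2.ge⟩
      · rintro ⟨⟨h1, h2⟩, -, h3⟩; exact ⟨h1, le_antisymm h2 h3⟩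
    rw [he]; exact (hLe a).inter (hGe a)
  have hsegm : ∀ a b : ℝ, MeasurableSet {ξ | ξ ∈ C ∧ a < R ξ / S ξ ∧ R ξ / S ξ ≤ b} := by
    intro a b
    have he : {ξ | ξ ∈ C ∧ a < R ξ / S ξ ∧ R ξ / S ξ ≤ b}
        = {ξ | ξ ∈ C ∧ a < R ξ / S ξ} ∩ {ξ | ξ ∈ C ∧ R ξ / S ξ ≤ b} := by
      ext ξ; simp only [mem_setOf_eq, mem_inter_iff]; tauto
    rw [he]; exact (hGt a).inter (hLe b)
  -- integrability of D/R on subsets of C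
  have hIDR : IntegrableOn (fun ξ => D / R ξ) C μ := by
    refine integrableOn_of_bound μ hCm (aemeasurable_const.div hRae) (D / Rmin) ?_
    intro ξ hξ
    rw [abs_of_nonneg (div_nonneg hD.le (hRpos ξ hξ).le)]
    exact div_le_div_of_nonneg_left hD.le hRmin (hR ξ hξ).1
  have hIDRsub : ∀ {A : Set (EuclideanSpace ℝ (Fin 2))}, A ⊆ C →
      IntegrableOn (fun ξ => D / R ξ) A μ := fun hA => hIDR.mono_set hA
  have hDRnn : ∀ ξ ∈ C, 0 ≤ D / R ξ := fun ξ hξ => div_nonneg hD.le (hRpos ξ hξ).le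
  -- the F function
  set F : ℝ → ℝ := fun a => ∫ ξ in {ξ | ξ ∈ C ∧ a < R ξ / S ξ}, D / R ξ ∂μ with hF
  have hFle : ∀ a, F a ≤ fbar := by
    intro a
    rw [hfbar]
    refine setIntegral_mono_set hIDR ?_ ?_
    · filter_upwards [ae_restrict_mem hCm] with ξ hξ using hDRnn ξ hξ
    · exact HasSubset.Subset.eventuallyLE fun ξ hξ => hξ.1
  have hFtop : ∀ a, a < ρmin → F a = fbar := by
    intro a ha
    have he : {ξ | ξ ∈ C ∧ a < R ξ / S ξ} = C := by
      ext ξ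
      simp only [mem_setOf_eq]
      exact ⟨fun h' => h'.1, fun h' => ⟨h', lt_of_lt_of_le ha (hρrange ξ h').1⟩⟩
    rw [hF]
    simp only [he, hfbar]
  have hFbot : ∀ a, ρmax ≤ a → F a = 0 := by
    intro a ha
    have he : {ξ | ξ ∈ C ∧ a < R ξ / S ξ} = (∅ : Set (EuclideanSpace ℝ (Fin 2))) := by
      ext ξ
      simp only [mem_setOf_eq, mem_empty_iff_false, iff_false, not_and, not_lt]
      exact fun h' => le_trans (hρrange ξ h').2 ha
    rw [hF]
    simp only [he, Measure.restrict_empty, integral_zero_measure]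
  -- the K bound on segments
  obtain ⟨M0, hM0⟩ := isCompact_Icc.exists_bound_of_continuousOn
    (hcont.continuousOn : ContinuousOn h (Icc ρmin ρmax))
  set M : ℝ := max M0 0 with hM
  have hMnn : 0 ≤ M := le_max_right _ _
  have hMb : ∀ t ∈ Icc ρmin ρmax, h t ≤ M := by
    intro t ht
    calc h t ≤ |h t| := le_abs_self _
      _ = ‖h t‖ := (Real.norm_eq_abs _).symm
      _ ≤ M0 := hM0 t ht
      _ ≤ M := le_max_left _ _
  set K : ℝ := (D / Rmin) * ((μ C).toReal * M) with hK
  have hKnn : 0 ≤ K :=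
    mul_nonneg (div_nonneg hD.le hRmin.le) (mul_nonneg ENNReal.toReal_nonneg hMnn)
  have hseg : ∀ a b : ℝ, ρmin ≤ a → a ≤ b → b ≤ ρmax →
      (∫ ξ in {ξ | ξ ∈ C ∧ a < R ξ / S ξ ∧ R ξ / S ξ ≤ b}, D / R ξ ∂μ) ≤ K * (b - a) := by
    intro a b ha hab hb
    have hsub : {ξ | ξ ∈ C ∧ a < R ξ / S ξ ∧ R ξ / S ξ ≤ b} ⊆ C := fun ξ hξ => hξ.1
    have hle1 : (∫ ξ in {ξ | ξ ∈ C ∧ a < R ξ / S ξ ∧ R ξ / S ξ ≤ b}, D / R ξ ∂μ)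
        ≤ (D / Rmin) * (μ {ξ | ξ ∈ C ∧ a < R ξ / S ξ ∧ R ξ / S ξ ≤ b}).toReal :=
      setIntegral_le_bound μ (hsegm a b) (hIDRsub hsub) (D / Rmin)
        (fun ξ hξ => div_le_div_of_nonneg_left hD.le hRmin (hR ξ hξ.1).1)
    have hmap : (μ {ξ | ξ ∈ C ∧ a < R ξ / S ξ ∧ R ξ / S ξ ≤ b}).toReal
        = (μ C).toReal * ∫ t in a..b, h t := by
      have h1 : ((μ.restrict C).map (fun ξ => R ξ / S ξ)) (Ioc a b)
          = μ.restrict C ((fun ξ => R ξ / S ξ) ⁻¹' (Ioc a b)) :=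
        Measure.map_apply_of_aemeasurable hρae measurableSet_Ioc
      have h2 : μ.restrict C ((fun ξ => R ξ / S ξ) ⁻¹' (Ioc a b))
          = μ {ξ | ξ ∈ C ∧ a < R ξ / S ξ ∧ R ξ / S ξ ≤ b} := by
        rw [Measure.restrict_apply' hCm]
        congr 1
        ext ξ
        simp only [mem_inter_iff, mem_preimage, mem_Ioc, mem_setOf_eq]
        tauto
      rw [← hdens a b ha hab hb, h1, h2]
    have hIh : ∫ t in a..b, h t ≤ M * (b - a) := by
      calc ∫ t in a..b, h t ≤ ∫ _ in a..b, M := by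
            refine intervalIntegral.integral_mono_on hab (hcont.intervalIntegrable a b)
              intervalIntegrable_const ?_
            intro t ht
            exact hMb t ⟨le_trans ha ht.1, le_trans ht.2 hb⟩
        _ = M * (b - a) := by rw [intervalIntegral.integral_const, smul_eq_mul, mul_comm]
    calc (∫ ξ in {ξ | ξ ∈ C ∧ a < R ξ / S ξ ∧ R ξ / S ξ ≤ b}, D / R ξ ∂μ)
        ≤ (D / Rmin) * ((μ C).toReal * ∫ t in a..b, h t) := by rw [← hmap]; exact hle1
      _ ≤ (D / Rmin) * ((μ C).toReal * (M * (b - a))) := by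
          refine mul_le_mul_of_nonneg_left ?_ (div_nonneg hD.le hRmin.le)
          exact mul_le_mul_of_nonneg_left hIh ENNReal.toReal_nonneg
      _ = K * (b - a) := by rw [hK]; ring
  -- splitting lemma
  have hsplit : ∀ a b : ℝ, a ≤ b →
      F a = F b + ∫ ξ in {ξ | ξ ∈ C ∧ a < R ξ / S ξ ∧ R ξ / S ξ ≤ b}, D / R ξ ∂μ := by
    intro a b hab
    have hun : {ξ | ξ ∈ C ∧ a < R ξ / S ξ}
        = {ξ | ξ ∈ C ∧ b < R ξ / S ξ} ∪ {ξ | ξ ∈ C ∧ a < R ξ / S ξ ∧ R ξ / S ξ ≤ b} := by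
      ext ξ
      simp only [mem_setOf_eq, mem_union]
      constructor
      · rintro ⟨h1, h2⟩
        rcases le_or_gt (R ξ / S ξ) b with hc | hc
        · exact Or.inr ⟨h1, h2, hc⟩
        · exact Or.inl ⟨h1, hc⟩
      · rintro (⟨h1, h2⟩ | ⟨h1, h2, h3⟩)
        · exact ⟨h1, lt_of_le_of_lt hab h2⟩
        · exact ⟨h1, h2⟩
    have hdisj : Disjoint {ξ | ξ ∈ C ∧ b < R ξ / S ξ}
        {ξ | ξ ∈ C ∧ a < R ξ / S ξ ∧ R ξ / S ξ ≤ b} := by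
      rw [Set.disjoint_left]
      rintro ξ ⟨h1, h2⟩ ⟨h3, h4, h5⟩
      exact absurd h5 (not_le.2 h2)
    rw [hF]
    simp only
    rw [hun, setIntegral_union hdisj (hsegm a b) (hIDRsub fun ξ hξ => hξ.1)
      (hIDRsub fun ξ hξ => hξ.1)]
  -- the threshold l
  set Sf : Set ℝ := {x : ℝ | f < ∫ ξ in {ξ | ξ ∈ C ∧ x < R ξ / S ξ}, D / R ξ ∂μ} with hSfd
  have hSfF : Sf = {x : ℝ | f < F x} := rfl
  set l : ℝ := ρf f with hldef
  have hl : l = sSup Sf := hρf f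
  have hub : ∀ s ∈ Sf, s ≤ ρmax := by
    intro s hs
    by_contra hc
    push_neg at hc
    have h0 : F s = 0 := hFbot s hc.le
    rw [hSfF, mem_setOf_eq, h0] at hs
    exact absurd (lt_of_le_of_lt hf.1 hs) (lt_irrefl 0)
  have hBdd : BddAbove Sf := ⟨ρmax, hub⟩
  -- the feasible-set map
  set T : ℝ → Set ℝ := fun b => {v : ℝ | ∃ x : EuclideanSpace ℝ (Fin 2) → ℝ,
      Measurable x ∧ (∀ ξ, 0 ≤ x ξ ∧ x ξ ≤ D) ∧
      (∫ ξ in C, x ξ / R ξ ∂μ) ≤ b ∧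
      v = ∫ ξ in C, (D - x ξ) / S ξ ∂μ} with hT
  have hτ' : ∀ b : ℝ, τ b = sInf (T b) := hτ
  have hTnonneg : ∀ b : ℝ, ∀ v ∈ T b, 0 ≤ v := by
    rintro b v ⟨x, hxm, hxb, hxg, rfl⟩
    refine setIntegral_nonneg hCm fun ξ hξ => div_nonneg ?_ (hSpos ξ hξ).le
    linarith [(hxb ξ).2]
  have hTne : ∀ b : ℝ, 0 ≤ b → (T b).Nonempty := by
    intro b hb
    refine ⟨∫ ξ in C, (D - (fun _ => (0:ℝ)) ξ) / S ξ ∂μ,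
      (fun _ => (0:ℝ)), measurable_const, fun ξ => ⟨le_refl 0, hD.le⟩, ?_, rfl⟩
    simp only [zero_div, integral_zero]
    exact hb
  rcases eq_or_lt_of_le hf.2 with hffbar | hflt
  · -- ### degenerate case f = fbar
    have hSfe : Sf = ∅ := by
      ext s
      rw [hSfF]
      simp only [mem_setOf_eq, mem_empty_iff_false, iff_false, not_lt]
      exact (hFle s).trans hffbar.ge
    have hl0 : l = 0 := by rw [hl, hSfe, Real.sSup_empty]
    constructor
    · intro g hg0 hgf
      have hττ : τ f ≤ τ g := by
        rw [hτ' f, hτ' g]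
        refine csInf_le_csInf ⟨0, fun v hv => hTnonneg f v hv⟩ (hTne g hg0) ?_
        rintro v ⟨x, hxm, hxb, hxg, rfl⟩
        exact ⟨x, hxm, hxb, hxg.trans (le_of_lt hgf), rfl⟩
      rw [hl0, neg_zero]
      exact div_nonpos_of_nonpos_of_nonneg (by linarith) (by linarith)
    · intro g hg1 hg2
      exact absurd (lt_of_lt_of_le hg1 hg2) (by rw [hffbar]; exact lt_irrefl _)
  · -- ### main case f < fbar
    have hne : Sf.Nonempty := by
      refine ⟨ρmin - 1, ?_⟩
      rw [hSfF, mem_setOf_eq, hFtop _ (by linarith)]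
      exact hflt
    have hl_lb : ρmin ≤ l := by
      by_contra hc
      push_neg at hc
      have hmem : (l + ρmin) / 2 ∈ Sf := by
        rw [hSfF, mem_setOf_eq, hFtop _ (by linarith)]
        exact hflt
      have h2 := le_csSup hBdd hmem
      rw [← hl] at h2
      linarith
    have hl_ub : l ≤ ρmax := by
      rw [hl]; exact csSup_le hne hub
    have hl0 : 0 ≤ l := le_trans hρmin.le hl_lb
    -- (c): F l ≤ f
    have hFl_le : F l ≤ f := by
      by_contra hc
      push_neg at hc
      rcases lt_or_ge l ρmax with hlm | hlm
      · set ε := F l - f with hε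
        have hεpos : 0 < ε := by linarith
        have hK1 : (0:ℝ) < K + 1 := by linarith
        set s := min (l + ε / (K + 1)) ρmax with hs
        have hls : l < s := lt_min (by linarith [div_pos hεpos hK1]) hlm
        have hsρ : s ≤ ρmax := min_le_right _ _
        have hsl : s - l ≤ ε / (K + 1) := by
          have h3 : s ≤ l + ε / (K + 1) := min_le_left _ _
          linarith
        have hFs : F s ≤ f := by
          by_contra hc2
          push_neg at hc2
          have hmem : s ∈ Sf := by rw [hSfF, mem_setOf_eq]; exact hc2
          have h4 := le_csSup hBdd hmem
          rw [← hl] at h4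
          linarith
        have hsegb := hseg l s hl_lb hls.le hsρ
        have hsp := hsplit l s hls.le
        have hKe : K * (s - l) ≤ K * (ε / (K + 1)) := mul_le_mul_of_nonneg_left hsl hKnn
        have hlt2 : K * (ε / (K + 1)) < ε := by
          rw [mul_div_assoc', div_lt_iff₀ hK1]
          nlinarith
        linarith
      · have h0 := hFbot l hlm
        linarith [hf.1]
    -- G: the mass at the threshold
    set G : ℝ := ∫ ξ in {ξ | ξ ∈ C ∧ R ξ / S ξ = l}, D / R ξ ∂μ with hG
    have hGnn : 0 ≤ G := setIntegral_nonneg (hEqm l) fun ξ hξ => hDRnn ξ hξ.1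
    -- (d): f ≤ F l + G
    have hf_le : f ≤ F l + G := by
      rcases eq_or_lt_of_le hl_lb with heq | hlt2
      · -- l = ρmin : F l + G = integral over all of C = fbar
        have hun : C = {ξ | ξ ∈ C ∧ l < R ξ / S ξ} ∪ {ξ | ξ ∈ C ∧ R ξ / S ξ = l} := by
          ext ξ
          simp only [mem_setOf_eq, mem_union]
          constructor
          · intro hξ
            rcases lt_or_eq_of_le (heq ▸ (hρrange ξ hξ).1 : l ≤ R ξ / S ξ) with h5 | h5
            · exact Or.inl ⟨hξ, h5⟩
            · exact Or.inr ⟨hξ, h5.symm⟩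
          · rintro (⟨h5, -⟩ | ⟨h5, -⟩) <;> exact h5
        have hdisj : Disjoint {ξ | ξ ∈ C ∧ l < R ξ / S ξ} {ξ | ξ ∈ C ∧ R ξ / S ξ = l} := by
          rw [Set.disjoint_left]
          rintro ξ ⟨-, h5⟩ ⟨-, h6⟩
          exact absurd h6 (ne_of_gt h5)
        have hfb2 : fbar = F l + G := by
          rw [hfbar]
          conv_lhs => rw [hun]
          rw [setIntegral_union hdisj (hEqm l) (hIDRsub fun ξ hξ => hξ.1)
            (hIDRsub fun ξ hξ => hξ.1)]
        linarith
      · by_contra hc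
        push_neg at hc
        set ε := f - (F l + G) with hε
        have hεpos : 0 < ε := by linarith
        have hK1 : (0:ℝ) < K + 1 := by linarith
        set δ := min (l - ρmin) (ε / (K + 1)) with hδ
        have hδpos : 0 < δ := lt_min (by linarith) (div_pos hεpos hK1)
        obtain ⟨s, hsSf, hss⟩ := exists_lt_of_lt_csSup hne (by rw [← hl]; linarith : l - δ < sSup Sf)
        have hsl : s ≤ l := by
          have h5 := le_csSup hBdd hsSf
          rwa [← hl] at h5
        have hsmin : ρmin ≤ s := by
          have h5 : δ ≤ l - ρmin := min_le_left _ _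
          linarith
        have hFs : f < F s := by rw [hSfF, mem_setOf_eq] at hsSf; exact hsSf
        have hsp := hsplit s l hsl
        have hsegb := hseg s l hsmin hsl hl_ub
        have h6 : l - s < δ := by linarith
        have h7 : K * (l - s) ≤ K * δ := mul_le_mul_of_nonneg_left h6.le hKnn
        have h8 : K * δ ≤ K * (ε / (K + 1)) :=
          mul_le_mul_of_nonneg_left (min_le_right _ _) hKnn
        have hlt3 : K * (ε / (K + 1)) < ε := by
          rw [mul_div_assoc', div_lt_iff₀ hK1]
          nlinarith
        linarith
    -- the optimal solution x'
    set P : Set (EuclideanSpace ℝ (Fin 2)) := {ξ | ξ ∈ C ∧ l < R ξ / S ξ} with hP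
    set E : Set (EuclideanSpace ℝ (Fin 2)) := {ξ | ξ ∈ C ∧ R ξ / S ξ = l} with hE
    have hPC : P ⊆ C := fun ξ hξ => hξ.1
    have hEC : E ⊆ C := fun ξ hξ => hξ.1
    have hPE : Disjoint P E := by
      rw [Set.disjoint_left]
      rintro ξ ⟨-, h5⟩ ⟨-, h6⟩
      exact absurd h6 (ne_of_gt h5)
    have hGne : G ≠ 0 → 0 < G := fun h0 => lt_of_le_of_ne hGnn (Ne.symm h0)
    set α : ℝ := if G = 0 then 0 else (f - F l) / G with hα
    have hα0 : 0 ≤ α := by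
      rw [hα]; split_ifs with h0
      · exact le_refl 0
      · exact div_nonneg (by linarith) (hGne h0).le
    have hα1 : α ≤ 1 := by
      rw [hα]; split_ifs with h0
      · linarith
      · rw [div_le_one (hGne h0)]; linarith
    have hbud_eq : F l + α * G = f := by
      rw [hα]; split_ifs with h0
      · have h9 : f ≤ F l + 0 := h0 ▸ hf_le
        rw [zero_mul, add_zero]
        linarith
      · rw [div_mul_cancel₀ _ h0]
        ring
    set x' : EuclideanSpace ℝ (Fin 2) → ℝ :=
      fun ξ => P.indicator (fun _ => D) ξ + E.indicator (fun _ => α * D) ξ with hx'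
    have hx'meas : Measurable x' :=
      (measurable_const.indicator (hGt l)).add (measurable_const.indicator (hEqm l))
    have hx'val : ∀ ξ, 0 ≤ x' ξ ∧ x' ξ ≤ D := by
      intro ξ
      simp only [hx']
      by_cases h1 : ξ ∈ P
      · have h2 : ξ ∉ E := fun h2 => (Set.disjoint_left.1 hPE h1) h2
        simp only [indicator_of_mem h1, indicator_of_notMem h2, add_zero]
        exact ⟨hD.le, le_refl D⟩
      · by_cases h2 : ξ ∈ E
        · simp only [indicator_of_notMem h1, indicator_of_mem h2, zero_add]
          constructor
          · exact mul_nonneg hα0 hD.le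
          · calc α * D ≤ 1 * D := mul_le_mul_of_nonneg_right hα1 hD.le
              _ = D := one_mul D
        · simp only [indicator_of_notMem h1, indicator_of_notMem h2, add_zero]
          exact ⟨le_refl 0, hD.le⟩
    -- budget of x' is exactly f
    have hbud : (∫ ξ in C, x' ξ / R ξ ∂μ) = f := by
      have heq1 : Set.EqOn (fun ξ => x' ξ / R ξ)
          (fun ξ => P.indicator (fun ξ => D / R ξ) ξ + E.indicator (fun ξ => α * (D / R ξ)) ξ)
          C := by
        intro ξ _
        simp only [hx', add_div]
        congr 1
        · by_cases h1 : ξ ∈ P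
          · simp only [indicator_of_mem h1]
          · simp only [indicator_of_notMem h1, zero_div]
        · by_cases h2 : ξ ∈ E
          · simp only [indicator_of_mem h2, mul_div_assoc]
          · simp only [indicator_of_notMem h2, zero_div]
      rw [setIntegral_congr_fun hCm heq1]
      rw [integral_add (hIDR.indicator (hGt l)) ((hIDR.const_mul α).indicator (hEqm l))]
      rw [integral_indicator (hGt l), integral_indicator (hEqm l)]
      rw [Measure.restrict_restrict (hGt l), Measure.restrict_restrict (hEqm l)]
      rw [inter_eq_left.2 hPC, inter_eq_left.2 hEC]
      rw [integral_const_mul]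
      exact hbud_eq
    -- integrability of feasible candidates
    have hIbud : ∀ x : EuclideanSpace ℝ (Fin 2) → ℝ, Measurable x →
        (∀ ξ, 0 ≤ x ξ ∧ x ξ ≤ D) → IntegrableOn (fun ξ => x ξ / R ξ) C μ := by
      intro x hxm hxb
      refine integrableOn_of_bound μ hCm (hxm.aemeasurable.div hRae) (D / Rmin) ?_
      intro ξ hξ
      rw [abs_of_nonneg (div_nonneg (hxb ξ).1 (hRpos ξ hξ).le)]
      calc x ξ / R ξ ≤ D / R ξ := by
            exact (div_le_div_iff_of_pos_right (hRpos ξ hξ)).2 (hxb ξ).2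
        _ ≤ D / Rmin := div_le_div_of_nonneg_left hD.le hRmin (hR ξ hξ).1
    have hIcost : ∀ x : EuclideanSpace ℝ (Fin 2) → ℝ, Measurable x →
        (∀ ξ, 0 ≤ x ξ ∧ x ξ ≤ D) → IntegrableOn (fun ξ => (D - x ξ) / S ξ) C μ := by
      intro x hxm hxb
      have hSae : AEMeasurable S (μ.restrict C) := hScont.aemeasurable hCm
      refine integrableOn_of_bound μ hCm
        ((aemeasurable_const.sub hxm.aemeasurable).div hSae) (D / Smin) ?_
      intro ξ hξ
      have h1 : 0 ≤ D - x ξ := by linarith [(hxb ξ).2]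
      rw [abs_of_nonneg (div_nonneg h1 (hSpos ξ hξ).le)]
      calc (D - x ξ) / S ξ ≤ D / S ξ := by
            exact (div_le_div_iff_of_pos_right (hSpos ξ hξ)).2 (by linarith [(hxb ξ).1])
        _ ≤ D / Smin := div_le_div_of_nonneg_left hD.le hSmin (hS ξ hξ).1
    -- combining cost + l * budget as a single integral
    have hW : ∀ y : EuclideanSpace ℝ (Fin 2) → ℝ, Measurable y →
        (∀ ξ, 0 ≤ y ξ ∧ y ξ ≤ D) →
        (∫ ξ in C, (D - y ξ) / S ξ ∂μ) + l * (∫ ξ in C, y ξ / R ξ ∂μ)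
          = ∫ ξ in C, ((D - y ξ) / S ξ + l * (y ξ / R ξ)) ∂μ := by
      intro y hym hyb
      rw [← integral_const_mul, ← integral_add (hIcost y hym hyb)
        ((hIbud y hym hyb).const_mul l)]
    -- key pointwise optimality inequality, integrated
    have hKI : ∀ x : EuclideanSpace ℝ (Fin 2) → ℝ, Measurable x →
        (∀ ξ, 0 ≤ x ξ ∧ x ξ ≤ D) →
        (∫ ξ in C, (D - x' ξ) / S ξ ∂μ) + l * f
          ≤ (∫ ξ in C, (D - x ξ) / S ξ ∂μ) + l * (∫ ξ in C, x ξ / R ξ ∂μ) := by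
      intro x hxm hxb
      rw [← hbud, hW x' hx'meas hx'val, hW x hxm hxb]
      refine setIntegral_mono_on
        ((hIcost x' hx'meas hx'val).add ((hIbud x' hx'meas hx'val).const_mul l))
        ((hIcost x hxm hxb).add ((hIbud x hxm hxb).const_mul l)) hCm ?_
      intro ξ hξ
      have hRne : R ξ ≠ 0 := (hRpos ξ hξ).ne'
      have hSne : S ξ ≠ 0 := (hSpos ξ hξ).ne'
      have expand : ∀ t : ℝ, (D - t) / S ξ + l * (t / R ξ)
          = D / S ξ + t * (l / R ξ - 1 / S ξ) := by
        intro t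
        field_simp
        ring
      rw [expand, expand]
      have key : x' ξ * (l / R ξ - 1 / S ξ) ≤ x ξ * (l / R ξ - 1 / S ξ) := by
        rcases lt_trichotomy (R ξ / S ξ) l with hc | hc | hc
        · -- below threshold: coefficient positive, x' = 0
          have hnP : ξ ∉ P := by
            simp only [hP, mem_setOf_eq, not_and, not_lt]
            intro _
            exact hc.le
          have hnE : ξ ∉ E := by
            simp only [hE, mem_setOf_eq, not_and]
            intro _
            exact ne_of_lt hc
          have hx0 : x' ξ = 0 := by
            simp only [hx', indicator_of_notMem hnP, indicator_of_notMem hnE, add_zero]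
          have hcoef : 0 < l / R ξ - 1 / S ξ := by
            have h5 : R ξ < l * S ξ := (div_lt_iff₀ (hSpos ξ hξ)).1 hc
            rw [div_sub_div _ _ hRne hSne]
            apply div_pos
            · nlinarith
            · exact mul_pos (hRpos ξ hξ) (hSpos ξ hξ)
          rw [hx0, zero_mul]
          exact mul_nonneg (hxb ξ).1 hcoef.le
        · -- at threshold: coefficient zero
          have hcoef : l / R ξ - 1 / S ξ = 0 := by
            rw [sub_eq_zero, ← hc]
            field_simp
          rw [hcoef, mul_zero, mul_zero]
        · -- above threshold: coefficient negative, x' = D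
          have hmP : ξ ∈ P := by
            simp only [hP, mem_setOf_eq]
            exact ⟨hξ, hc⟩
          have hnE : ξ ∉ E := by
            simp only [hE, mem_setOf_eq, not_and]
            intro _
            exact ne_of_gt hc
          have hxD : x' ξ = D := by
            simp only [hx', indicator_of_mem hmP, indicator_of_notMem hnE, add_zero]
          have hcoef : l / R ξ - 1 / S ξ < 0 := by
            have h5 : l * S ξ < R ξ := (lt_div_iff₀ (hSpos ξ hξ)).1 hc
            rw [div_sub_div _ _ hRne hSne]
            apply div_neg_of_neg_of_pos
            · nlinarith
            · exact mul_pos (hRpos ξ hξ) (hSpos ξ hξ)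
          rw [hxD]
          exact mul_le_mul_of_nonpos_right (hxb ξ).2 hcoef.le
      linarith
    -- weak duality lower bound
    have hlb : ∀ g : ℝ, ∀ v ∈ T g,
        (∫ ξ in C, (D - x' ξ) / S ξ ∂μ) + l * (f - g) ≤ v := by
      rintro g v ⟨x, hxm, hxb, hxg, rfl⟩
      have h1 := hKI x hxm hxb
      have h2 : l * (∫ ξ in C, x ξ / R ξ ∂μ) ≤ l * g := mul_le_mul_of_nonneg_left hxg hl0
      nlinarith
    have hτlb : ∀ g : ℝ, 0 ≤ g →
        (∫ ξ in C, (D - x' ξ) / S ξ ∂μ) + l * (f - g) ≤ τ g := by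
      intro g hg
      rw [hτ' g]
      exact le_csInf (hTne g hg) (hlb g)
    have hτf_le : τ f ≤ ∫ ξ in C, (D - x' ξ) / S ξ ∂μ := by
      rw [hτ' f]
      exact csInf_le ⟨(∫ ξ in C, (D - x' ξ) / S ξ ∂μ) + l * (f - f), fun v hv => hlb f v hv⟩
        ⟨x', hx'meas, hx'val, le_of_eq hbud, rfl⟩
    constructor
    · intro g hg0 hgf
      have h1 := hτlb g hg0
      have hfg : 0 < f - g := by linarith
      rw [div_le_iff₀ hfg]
      nlinarith
    · intro g hgf hgfb
      have h1 := hτlb g (le_trans hf.1 hgf.le)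
      have hgfpos : 0 < g - f := by linarith
      rw [le_div_iff₀ hgfpos]
      nlinarith
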